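/- arXiv:2403.07482 — 2 statements merged into one kernel-verified Lean document; each statement's English description precedes it below -/
import Mathlib

section
/- Let p be a prime, q > 1 a power of p, and K a field containing a primitive q-th root of unity. Let a ∈ K^× and let L be a splitting field of X^q − a over K, so that L/K is a finite Galois extension. Let A be a valuation subring of L, let O = A ∩ K be its restriction to K, and assume that the residue field of O has characteristic different from p. If there exists b ∈ K^× such that a·b^{−q} is a unit of O (i.e., the value of a lies in q times the value group of O), then the inertia subgroup of Gal(L/K) at A is trivial. -/
open Polynomial

/-- Let `p` be a prime, `q > 1` a power of `p`, and `K` a field containing a primitive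
`q`-th root of unity.  Let `a ∈ K^×`, let `L` be a splitting field of `X^q − a` over `K`,
let `A` be a valuation subring of `L` and `O = A ∩ K` its restriction to `K`, whose
residue field is assumed to have characteristic different from `p`.  If there is
`b ∈ K^×` with `a·b^{−q}` a unit of `O`, then the inertia subgroup of `Gal(L/K)` at `A`
is trivial. -/
theorem stmt7 (p q s : ℕ) (hp : p.Prime) (hqs : q = p ^ s) (hq1 : 1 < q)
    {K L : Type*} [Field K] [Field L] [Algebra K L]
    (ζ : K) (hζ : IsPrimitiveRoot ζ q)
    (a : K) (ha : a ≠ 0)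
    [IsSplittingField K L (X ^ q - C a)]
    (A : ValuationSubring L)
    (hchar : ringChar (IsLocalRing.ResidueField (A.comap (algebraMap K L))) ≠ p)
    (hval : ∃ b : K, b ≠ 0 ∧ a / b ^ q ∈ A.comap (algebraMap K L) ∧
      (a / b ^ q)⁻¹ ∈ A.comap (algebraMap K L)) :
    ValuationSubring.inertiaSubgroup K A = ⊥ := by
  classical
  obtain ⟨b, hb0, hbA, hbA'⟩ := hval
  have hq0 : q ≠ 0 := by omega
  haveI : NeZero q := ⟨hq0⟩
  set φ := algebraMap K L with hφdef
  have hφ : Function.Injective φ := (algebraMap K L).injective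
  have hζ' : IsPrimitiveRoot (φ ζ) q := hζ.map_of_injective hφ
  -- a root α of X^q - a in L
  have hsplit : Splits ((X ^ q - C a).map φ) := IsSplittingField.splits L _
  have hdeg : (X ^ q - C a).degree ≠ 0 := by
    rw [Polynomial.degree_X_pow_sub_C (by omega) a]
    exact_mod_cast hq0
  obtain ⟨α, hα⟩ := hsplit.exists_eval_eq_zero (by rwa [degree_map])
  have hαq : α ^ q = φ a := by
    have := hα
    simp only [eval_map, eval₂_sub, eval₂_pow, eval₂_X, eval₂_C, sub_eq_zero] at this
    exact this
  have hφa0 : φ a ≠ 0 := (map_ne_zero φ).mpr ha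
  have hα0 : α ≠ 0 := by
    intro h
    rw [h, zero_pow hq0] at hαq
    exact hφa0 hαq.symm
  -- helper: valuation-1 from q-th power
  have hpow1 : ∀ x : L, A.valuation x ^ q = 1 → A.valuation x = 1 := fun x hx =>
    (pow_eq_one_iff_of_nonneg zero_le' hq0).mp hx
  -- ζ' has valuation 1, lies in A
  have hvζ : ∀ j : ℕ, A.valuation (φ ζ ^ j) = 1 := by
    intro j
    have h1 : A.valuation (φ ζ) = 1 := by
      apply hpow1
      rw [← map_pow, ← map_pow, hζ.pow_eq_one, map_one, map_one]
    rw [map_pow, h1, one_pow]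
  have hζA : ∀ j : ℕ, φ ζ ^ j ∈ A := fun j => A.mem_of_valuation_le_one _ (hvζ j).le
  -- u := α / φ b is a unit of A
  set w : L := φ b with hw
  have hw0 : w ≠ 0 := by
    intro h
    exact hb0 (hφ (h.trans (map_zero φ).symm))
  set u : L := α / w with hu
  have hu0 : u ≠ 0 := div_ne_zero hα0 hw0
  have huq : u ^ q = φ (a / b ^ q) := by
    rw [hu, div_pow, hαq, map_div₀, map_pow]
  have hvu : A.valuation u = 1 := by
    apply hpow1
    rw [← map_pow, huq]
    have h1 : A.valuation (φ (a / b ^ q)) ≤ 1 :=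
      A.valuation_le_one ⟨_, ValuationSubring.mem_comap.mp hbA⟩
    have h2 : (A.valuation (φ (a / b ^ q)))⁻¹ ≤ 1 := by
      rw [← map_inv₀ A.valuation, ← map_inv₀ φ]
      exact A.valuation_le_one ⟨_, ValuationSubring.mem_comap.mp hbA'⟩
    have hne : A.valuation (φ (a / b ^ q)) ≠ 0 :=
      (Valuation.ne_zero_iff _).mpr
        ((map_ne_zero φ).mpr (div_ne_zero ha (pow_ne_zero _ hb0)))
    refine le_antisymm h1 ?_
    calc (1 : _) = A.valuation (φ (a / b ^ q)) * (A.valuation (φ (a / b ^ q)))⁻¹ :=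
          (mul_inv_cancel₀ hne).symm
      _ ≤ A.valuation (φ (a / b ^ q)) * 1 := by gcongr
      _ = A.valuation (φ (a / b ^ q)) := mul_one _
  have huA : u ∈ A := A.mem_of_valuation_le_one u hvu.le
  set ua : A := ⟨u, huA⟩ with hua
  have huaUnit : IsUnit ua := (A.valuation_eq_one_iff ua).mpr hvu
  -- main step
  rw [eq_bot_iff]
  intro σ hσ
  simp only [Subgroup.mem_bot]
  have hker : MulSemiringAction.toRingAut (A.decompositionSubgroup K)
      (IsLocalRing.ResidueField A) σ = 1 := hσ
  have hres : ∀ x : A, IsLocalRing.residue A (σ • x) = IsLocalRing.residue A x := by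
    intro x
    rw [IsLocalRing.ResidueField.residue_smul]
    have := DFunLike.congr_fun hker (IsLocalRing.residue A x)
    simpa using this
  -- σ α is a root of X^q - a
  have hσαq : ((σ : L ≃ₐ[K] L) α) ^ q = φ a := by
    rw [← map_pow, hαq]
    exact (σ : L ≃ₐ[K] L).commutes a
  obtain ⟨i, hiq, hi⟩ := hζ'.eq_pow_of_pow_eq_one (ξ := (σ : L ≃ₐ[K] L) α / α)
    (by rw [div_pow, hσαq, hαq, div_self hφa0])
  have hσα : (σ : L ≃ₐ[K] L) α = φ ζ ^ i * α := by
    rw [eq_div_iff hα0] at hi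
    exact hi.symm
  -- coercion of the smul on A
  have hσuaL : ((σ • ua : A) : L) = (σ : L ≃ₐ[K] L) u := rfl
  have hσu : (σ : L ≃ₐ[K] L) u = φ ζ ^ i * u := by
    rw [hu, map_div₀, hσα, hw, (σ : L ≃ₐ[K] L).commutes b, mul_div_assoc]
  -- derive: φ ζ ^ i - 1 lies in the maximal ideal of A
  set za : A := ⟨φ ζ ^ i, hζA i⟩ with hza
  have hσua : σ • ua = za * ua := by
    apply Subtype.ext
    rw [hσuaL, hσu]
    rfl
  have hmem : za - 1 ∈ IsLocalRing.maximalIdeal A := by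
    have h1 : IsLocalRing.residue A (za * ua) = IsLocalRing.residue A ua := by
      rw [← hσua]; exact hres ua
    have h2 : IsLocalRing.residue A ((za - 1) * ua) = 0 := by
      rw [sub_mul, one_mul, map_sub, h1, sub_self]
    have h3 : (za - 1) * ua ∈ IsLocalRing.maximalIdeal A :=
      (IsLocalRing.residue_eq_zero_iff _).mp h2
    obtain ⟨v, hv⟩ := huaUnit
    have : za - 1 = ((za - 1) * ua) * (↑v⁻¹ : A) := by
      rw [mul_assoc, ← hv, ← Units.val_mul]
      simp
    rw [this]
    exact Ideal.mul_mem_right _ _ h3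
  -- show φ ζ ^ i = 1
  have hζi1 : φ ζ ^ i = 1 := by
    by_contra hne1
    have hi0 : i ≠ 0 := by
      intro h; rw [h, pow_zero] at hne1; exact hne1 rfl
    -- the product formula: ∏_{k=1}^{q-1} (1 - ζ^k) = q in L
    obtain ⟨n, hn⟩ : ∃ n, q = n + 1 := ⟨q - 1, by omega⟩
    have hζ'' : IsPrimitiveRoot (φ ζ) (n + 1) := hn ▸ hζ'
    have hprod : ∏ k ∈ Finset.range n, (1 - φ ζ ^ (k + 1)) = (n : L) + 1 :=
      hζ''.prod_one_sub_pow_eq_order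
    -- inside A
    set F : ℕ → A := fun k => ⟨1 - φ ζ ^ (k + 1), sub_mem (one_mem A) (hζA _)⟩ with hF
    have hprodA : ((∏ k ∈ Finset.range n, F k : A) : L) = (q : L) := by
      have hc : ((∏ k ∈ Finset.range n, F k : A) : L)
          = ∏ k ∈ Finset.range n, ((F k : L)) := by
        exact_mod_cast rfl
      rw [hc]
      have : ∀ k, ((F k : L)) = 1 - φ ζ ^ (k + 1) := fun k => rfl
      simp only [this]
      rw [hprod, hn]
      push_cast
      ring
    have hqm : ((q : ℕ) : A) ∈ IsLocalRing.maximalIdeal A := by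
      have hi1n : i - 1 ∈ Finset.range n := Finset.mem_range.mpr (by omega)
      have hFi : F (i - 1) ∈ IsLocalRing.maximalIdeal A := by
        have : F (i - 1) = -(za - 1) := by
          apply Subtype.ext
          show 1 - φ ζ ^ (i - 1 + 1) = -(φ ζ ^ i - 1)
          rw [Nat.sub_add_cancel (by omega)]
          ring
        rw [this]
        exact neg_mem hmem
      have hprodmem : (∏ k ∈ Finset.range n, F k) ∈ IsLocalRing.maximalIdeal A := by
        rw [← Finset.mul_prod_erase _ _ hi1n]
        exact Ideal.mul_mem_right _ _ hFi
      have : ((q : ℕ) : A) = ∏ k ∈ Finset.range n, F k := by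
        apply Subtype.ext
        rw [hprodA]
        simp
      rw [this]
      exact hprodmem
    -- transfer to O = A.comap φ
    set O := A.comap (algebraMap K L) with hO
    have hqO : ((q : ℕ) : O) ∈ IsLocalRing.maximalIdeal O := by
      rw [IsLocalRing.mem_maximalIdeal, mem_nonunits_iff]
      intro hunit
      obtain ⟨t, ht⟩ := isUnit_iff_exists_inv.mp hunit
      have htA : φ (t : K) ∈ A := ValuationSubring.mem_comap.mp t.2
      have : ((q : ℕ) : A) * ⟨φ (t : K), htA⟩ = 1 := by
        apply Subtype.ext
        show ((q : ℕ) : L) * φ (t : K) = 1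
        have := congrArg (fun x : O => φ (x : K)) ht
        simpa using this
      have : IsUnit ((q : ℕ) : A) := isUnit_iff_exists_inv.mpr ⟨_, this⟩
      exact (IsLocalRing.mem_maximalIdeal _).mp hqm this
    -- residue field characteristic
    have hq0' : ((q : ℕ) : IsLocalRing.ResidueField O) = 0 := by
      have := (IsLocalRing.residue_eq_zero_iff _).mpr hqO
      rwa [map_natCast] at this
    have hp0 : ((p : ℕ) : IsLocalRing.ResidueField O) = 0 := by
      have hs0 : s ≠ 0 := by
        intro h; rw [h, pow_zero] at hqs; omega
      rw [hqs] at hq0'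
      push_cast at hq0'
      exact pow_eq_zero_iff hs0 |>.mp hq0'
    exact hchar (CharP.ringChar_of_prime_eq_zero hp hp0)
  -- conclude σ = 1
  have hσα1 : (σ : L ≃ₐ[K] L) α = α := by rw [hσα, hζi1, one_mul]
  have hfix : ∀ x ∈ (X ^ q - C a).rootSet L, (σ : L ≃ₐ[K] L) x = x := by
    intro β hβ
    rw [mem_rootSet] at hβ
    have hβq : β ^ q = φ a := by
      have := hβ.2
      simp only [map_sub, map_pow, aeval_X, aeval_C, sub_eq_zero] at this
      exact this
    obtain ⟨j, hj, hjeq⟩ := hζ'.eq_pow_of_pow_eq_one (ξ := β / α)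
      (by rw [div_pow, hβq, hαq, div_self hφa0])
    have hβα : β = φ ζ ^ j * α := by
      rw [eq_div_iff hα0] at hjeq
      exact hjeq.symm
    rw [hβα, map_mul, map_pow, (σ : L ≃ₐ[K] L).commutes ζ, hσα1]
  have htop : ⊤ ≤ AlgHom.equalizer ((σ : L ≃ₐ[K] L) : L →ₐ[K] L) (AlgHom.id K L) := by
    rw [← IsSplittingField.adjoin_rootSet L (X ^ q - C a)]
    exact Algebra.adjoin_le fun x hx => hfix x hx
  apply Subtype.ext
  apply AlgEquiv.ext
  intro x
  exact htop (Algebra.mem_top) (x := x)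
end

section
/- Let p be a prime, q > 1 a power of p, and K a field containing a primitive q-th root of unity. Let v : K^× → ℤ be a surjective discrete valuation on K whose residue field has characteristic different from p, and let O be its valuation ring. Let a ∈ K^× with p ∤ v(a) (so that the class of v(a) generates ℤ/q), and let L be a splitting field of X^q − a over K. Then [L : K] = q, and for every valuation subring A of L with A ∩ K = O, the inertia subgroup of Gal(L/K) at A is the whole group Gal(L/K). -/
open Polynomial
open scoped Pointwise

section Stmt8Aux

variable {K : Type*} [Field K] {L : Type*} [Field L] [Algebra K L]

theorem stmt8_v_one (v : K → ℤ)
    (hmul : ∀ x y : K, x ≠ 0 → y ≠ 0 → v (x * y) = v x + v y) : v 1 = 0 := by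
  have := hmul 1 1 one_ne_zero one_ne_zero
  simpa using this.symm

theorem stmt8_v_inv (v : K → ℤ)
    (hmul : ∀ x y : K, x ≠ 0 → y ≠ 0 → v (x * y) = v x + v y)
    {x : K} (hx : x ≠ 0) : v x⁻¹ = -v x := by
  have h := hmul x x⁻¹ hx (inv_ne_zero hx)
  rw [mul_inv_cancel₀ hx, stmt8_v_one v hmul] at h
  omega

theorem stmt8_v_pow (v : K → ℤ)
    (hmul : ∀ x y : K, x ≠ 0 → y ≠ 0 → v (x * y) = v x + v y)
    {x : K} (hx : x ≠ 0) (n : ℕ) : v (x ^ n) = n * v x := by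
  induction n with
  | zero => simpa using stmt8_v_one v hmul
  | succ n ih =>
    rw [pow_succ, hmul _ _ (pow_ne_zero _ hx) hx, ih]
    push_cast; ring

theorem stmt8_mono_pow (q : ℕ) (a : K) (α : L) (hαq : α ^ q = algebraMap K L a)
    (c : K) (i : ℕ) :
    (algebraMap K L c * α ^ i) ^ q = algebraMap K L (c ^ q * a ^ i) := by
  rw [mul_pow, ← map_pow, ← pow_right_comm, hαq, ← map_pow, ← map_mul]

theorem stmt8_v_mono (q : ℕ) (v : K → ℤ)
    (hmul : ∀ x y : K, x ≠ 0 → y ≠ 0 → v (x * y) = v x + v y)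
    {a c : K} (ha : a ≠ 0) (hc : c ≠ 0) (i : ℕ) :
    v (c ^ q * a ^ i) = q * v c + i * v a := by
  rw [hmul _ _ (pow_ne_zero _ hc) (pow_ne_zero _ ha), stmt8_v_pow v hmul hc,
    stmt8_v_pow v hmul ha]

/-- If `y ^ q` comes from `O`, then `y ∈ A`. -/
theorem stmt8_memA (q : ℕ) (hq : 0 < q) (v : K → ℤ)
    (O : ValuationSubring K) (hO : ∀ x : K, x ∈ O ↔ x = 0 ∨ 0 ≤ v x)
    (A : ValuationSubring L) (hA : ∀ k : K, algebraMap K L k ∈ A ↔ k ∈ O)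
    (y : L) (k : K) (hyk : y ^ q = algebraMap K L k) (h0 : 0 ≤ v k) : y ∈ A := by
  by_contra hy
  obtain hy' := (A.mem_or_inv_mem y).resolve_left hy
  have hyA : y ^ q ∈ A := by rw [hyk]; exact (hA k).mpr ((hO k).mpr (Or.inr h0))
  rcases eq_or_ne y 0 with rfl | hy0
  · exact hy (zero_mem A)
  have hq1 : q - 1 + 1 = q := Nat.succ_pred_eq_of_pos hq
  have hid : y = y ^ q * (y⁻¹) ^ (q - 1) := by
    rw [inv_pow]
    field_simp
    rw [← pow_succ', hq1]
  exact hy (by rw [hid]; exact mul_mem hyA (pow_mem hy' _))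

/-- If `y ^ q` comes from the maximal ideal of `O`, then `y` is in the maximal
ideal of `A`. -/
theorem stmt8_maxA (q : ℕ) (hq : 0 < q) (v : K → ℤ)
    (hmul : ∀ x y : K, x ≠ 0 → y ≠ 0 → v (x * y) = v x + v y)
    (O : ValuationSubring K) (hO : ∀ x : K, x ∈ O ↔ x = 0 ∨ 0 ≤ v x)
    (A : ValuationSubring L) (hA : ∀ k : K, algebraMap K L k ∈ A ↔ k ∈ O)
    (y : L) (k : K) (hk : k ≠ 0) (hyk : y ^ q = algebraMap K L k) (h1 : 1 ≤ v k) :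
    ∃ h : y ∈ A, (⟨y, h⟩ : A) ∈ IsLocalRing.maximalIdeal A := by
  have hyA : y ∈ A := stmt8_memA q hq v O hO A hA y k hyk (by omega)
  refine ⟨hyA, ?_⟩
  rw [IsLocalRing.mem_maximalIdeal, mem_nonunits_iff]
  intro hu
  obtain ⟨z, hz⟩ := IsUnit.exists_right_inv hu
  have hy0 : y ≠ 0 := by
    intro h
    apply hk
    have : algebraMap K L k = 0 := by rw [← hyk, h, zero_pow hq.ne']
    exact (_root_.map_eq_zero (algebraMap K L)).mp this
  have hzy : (z : L) = y⁻¹ := by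
    have : y * (z : L) = 1 := congrArg Subtype.val hz
    field_simp at this ⊢
    linear_combination this
  have hinvA : (y⁻¹) ^ q ∈ A := by rw [← hzy]; exact pow_mem z.2 q
  have : algebraMap K L k⁻¹ ∈ A := by
    rwa [inv_pow, hyk, ← map_inv₀] at hinvA
  have hkO : k⁻¹ ∈ O := (hA _).mp this
  rcases (hO _).mp hkO with h | h
  · exact hk (by simpa using h)
  · rw [stmt8_v_inv v hmul hk] at h; omega


/-- The key negative direction: if the minimal term value is negative, the sum is
not in `A`. -/
theorem stmt8_not_mem (q : ℕ) (hq1 : 1 < q) (v : K → ℤ)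
    (hmul : ∀ x y : K, x ≠ 0 → y ≠ 0 → v (x * y) = v x + v y)
    (hsurj : ∀ k : ℤ, ∃ x : K, x ≠ 0 ∧ v x = k)
    (O : ValuationSubring K) (hO : ∀ x : K, x ∈ O ↔ x = 0 ∨ 0 ≤ v x)
    (a : K) (ha : a ≠ 0) (hcop : IsCoprime (q : ℤ) (v a))
    (α : L) (hαq : α ^ q = algebraMap K L a)
    (A : ValuationSubring L) (hA : ∀ k : K, algebraMap K L k ∈ A ↔ k ∈ O)
    (c : Fin q → K) (i₀ : Fin q) (hc₀ : c i₀ ≠ 0)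
    (hmin : ∀ i : Fin q, c i ≠ 0 →
      q * v (c i₀) + (i₀ : ℕ) * v a ≤ q * v (c i) + (i : ℕ) * v a)
    (hneg : q * v (c i₀) + (i₀ : ℕ) * v a < 0) :
    (∑ i : Fin q, algebraMap K L (c i) * α ^ (i : ℕ)) ∉ A := by
  intro hx
  have hq0 : 0 < q := by omega
  have hqz : (0:ℤ) < q := by exact_mod_cast hq0
  set M : ℤ := q * v (c i₀) + (i₀ : ℕ) * v a with hM
  -- find a monomial of value -M
  obtain ⟨e, f, hef⟩ := id hcop
  set t : ℤ := (-M) * f with ht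
  set D : ℤ := t / q with hD
  set j : ℤ := t % q with hj
  have hj0 : 0 ≤ j := Int.emod_nonneg t (by positivity)
  have hjq : j < q := Int.emod_lt_of_pos t hqz
  have hjt : (q:ℤ) * D + j = t := Int.mul_ediv_add_emod t q
  set jn : ℕ := j.toNat with hjndef
  have hjn : (jn : ℤ) = j := Int.toNat_of_nonneg hj0
  have hjnq : jn < q := by omega
  set n' : ℤ := D * v a - M * e with hn'
  have key : (q:ℤ) * n' + j * v a = -M := by
    have hjt' : (q:ℤ) * D + j = (-M) * f := hjt
    linear_combination (v a) * hjt' + (-M) * hef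
  obtain ⟨cc, hcc0, hvcc⟩ := hsurj n'
  set y : L := algebraMap K L cc * α ^ jn with hy
  have hyq : y ^ q = algebraMap K L (cc ^ q * a ^ jn) := stmt8_mono_pow q a α hαq cc jn
  have hvyk : v (cc ^ q * a ^ jn) = -M := by
    rw [stmt8_v_mono q v hmul ha hcc0, hvcc, hjn]; exact key
  have hMneg : M ≤ -1 := by omega
  obtain ⟨hyA, hym⟩ := stmt8_maxA q hq0 v hmul O hO A hA y _
    (mul_ne_zero (pow_ne_zero _ hcc0) (pow_ne_zero _ ha)) hyq (by rw [hvyk]; omega)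
  -- the product expansion
  set g : Fin q → L := fun i =>
    algebraMap K L (c i * cc * a ^ (((i : ℕ) + jn) / q)) * α ^ (((i : ℕ) + jn) % q)
    with hg
  have hprod : ∀ i : Fin q, (algebraMap K L (c i) * α ^ (i : ℕ)) * y = g i := by
    intro i
    by_cases hlt : (i : ℕ) + jn < q
    · have h1 : ((i:ℕ) + jn) / q = 0 := Nat.div_eq_of_lt hlt
      have h2 : ((i:ℕ) + jn) % q = (i:ℕ) + jn := Nat.mod_eq_of_lt hlt
      rw [hg]; simp only [h1, h2, pow_zero, mul_one, map_mul, pow_add]; ring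
    · have hge : q ≤ (i:ℕ) + jn := le_of_not_gt hlt
      have h1 : ((i:ℕ) + jn) / q = 1 :=
        Nat.div_eq_of_lt_le (by omega) (by omega)
      have h2 : (i:ℕ) + jn = q + ((i:ℕ) + jn) % q := by
        have hdm := Nat.div_add_mod ((i:ℕ) + jn) q
        rw [h1] at hdm
        omega
      rw [hg]
      simp only [h1, pow_one, map_mul]
      conv_lhs => rw [show (algebraMap K L (c i) * α ^ (i:ℕ)) * y
        = algebraMap K L (c i) * algebraMap K L cc * α ^ ((i:ℕ) + jn) by
          rw [hy]; rw [pow_add]; ring]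
      conv_lhs => rw [h2, pow_add]
      rw [hαq]
      ring
  -- value computation for products
  have hval : ∀ i : Fin q, c i ≠ 0 →
      v (c i * cc * a ^ (((i : ℕ) + jn) / q)) * q + (((i : ℕ) + jn) % q : ℕ) * v a
        = (q * v (c i) + (i : ℕ) * v a) - M := by
    intro i hci
    have hd := Nat.div_add_mod ((i:ℕ) + jn) q
    have hdZ : ((i:ℕ):ℤ) + jn = q * ((((i:ℕ) + jn) / q : ℕ) : ℤ)
        + ((((i:ℕ) + jn) % q : ℕ) : ℤ) := by exact_mod_cast hd.symm
    rw [hmul _ _ (mul_ne_zero hci hcc0) (pow_ne_zero _ ha),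
      hmul _ _ hci hcc0, stmt8_v_pow v hmul ha, hvcc]
    rw [hjn] at hdZ
    linear_combination (-(v a)) * hdZ + key
  -- the distinguished index lands at position 0
  have hk0 : ((i₀ : ℕ) + jn) % q = 0 := by
    have h0 : v (c i₀ * cc * a ^ (((i₀ : ℕ) + jn) / q)) * q
        + ((((i₀ : ℕ) + jn) % q : ℕ) : ℤ) * v a = 0 := by
      rw [hval i₀ hc₀, hM]; ring
    have hdvd : (q:ℤ) ∣ ((((i₀ : ℕ) + jn) % q : ℕ) : ℤ) * v a :=
      ⟨-(v (c i₀ * cc * a ^ (((i₀ : ℕ) + jn) / q))), by linarith⟩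
    have hdvd2 : (q:ℤ) ∣ ((((i₀ : ℕ) + jn) % q : ℕ) : ℤ) :=
      hcop.dvd_of_dvd_mul_right hdvd
    have : q ∣ ((i₀ : ℕ) + jn) % q := by exact_mod_cast hdvd2
    exact Nat.eq_zero_of_dvd_of_lt this (Nat.mod_lt _ hq0)
  -- all terms with `i ≠ i₀` are in the maximal ideal
  have hterm : ∀ i : Fin q, i ≠ i₀ → ∃ h : g i ∈ A,
      (⟨g i, h⟩ : A) ∈ IsLocalRing.maximalIdeal A := by
    intro i hne
    by_cases hci : c i = 0
    · have hgz : g i = 0 := by rw [hg]; simp [hci]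
      refine ⟨hgz ▸ A.zero_mem, ?_⟩
      have : (⟨g i, hgz ▸ A.zero_mem⟩ : A) = 0 := Subtype.ext hgz
      rw [this]; exact Submodule.zero_mem _
    · -- value of the term is ≥ 1
      set E := ((i:ℕ) + jn) / q with hE
      set R := ((i:ℕ) + jn) % q with hR
      have hvali := hval i hci
      rw [← hE, ← hR] at hvali
      have hd0 : c i * cc * a ^ E ≠ 0 :=
        mul_ne_zero (mul_ne_zero hci hcc0) (pow_ne_zero _ ha)
      have hRne : R ≠ 0 := by
        intro hR0
        apply hne
        have h1 : ((i:ℕ) + jn) % q = ((i₀:ℕ) + jn) % q := by rw [← hR, hR0, hk0]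
        have h2 : (i:ℕ) ≡ (i₀:ℕ) [MOD q] :=
          Nat.ModEq.add_right_cancel' jn (by unfold Nat.ModEq; rw [h1])
        exact Fin.ext (h2.eq_of_lt_of_lt i.isLt i₀.isLt)
      have hge1 : 1 ≤ v (c i * cc * a ^ E) * q + (R:ℤ) * v a := by
        rcases lt_or_ge (v (c i * cc * a ^ E) * q + (R:ℤ) * v a) 1 with hlow | h
        · exfalso
          have h0 : v (c i * cc * a ^ E) * q + (R:ℤ) * v a = 0 := by
            have := hmin i hci
            omega
          have hdvd : (q:ℤ) ∣ (R:ℤ) * v a := ⟨-(v (c i * cc * a ^ E)), by linarith⟩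
          have hdvd2 : (q:ℤ) ∣ (R:ℤ) := hcop.dvd_of_dvd_mul_right hdvd
          have : q ∣ R := by exact_mod_cast hdvd2
          exact hRne (Nat.eq_zero_of_dvd_of_lt this (Nat.mod_lt _ hq0))
        · exact h
      have hpow : g i ^ q = algebraMap K L ((c i * cc * a ^ E) ^ q * a ^ R) :=
        stmt8_mono_pow q a α hαq _ _
      have hvk : v ((c i * cc * a ^ E) ^ q * a ^ R) = v (c i * cc * a ^ E) * q + (R:ℤ) * v a := by
        rw [stmt8_v_mono q v hmul ha hd0]; ring
      exact stmt8_maxA q hq0 v hmul O hO A hA (g i) _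
        (mul_ne_zero (pow_ne_zero _ hd0) (pow_ne_zero _ ha)) hpow (by rw [hvk]; omega)
  -- assemble: x*y = g i₀ + rest
  set x : L := ∑ i : Fin q, algebraMap K L (c i) * α ^ (i : ℕ) with hxdef
  have hz : x * y ∈ A := mul_mem hx hyA
  have hzm : (⟨x * y, hz⟩ : A) ∈ IsLocalRing.maximalIdeal A := by
    have he : (⟨x * y, hz⟩ : A) = ⟨x, hx⟩ * ⟨y, hyA⟩ := rfl
    rw [he]; exact Ideal.mul_mem_left _ _ hym
  have hxy : x * y = g i₀ + ∑ i ∈ Finset.univ.erase i₀, g i := by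
    rw [hxdef, Finset.sum_mul]
    have : ∀ i ∈ Finset.univ, (algebraMap K L (c i) * α ^ (i:ℕ)) * y = g i :=
      fun i _ => hprod i
    rw [Finset.sum_congr rfl this]
    exact (Finset.add_sum_erase _ g (Finset.mem_univ i₀)).symm
  have hrestA : ∀ i ∈ Finset.univ.erase i₀, g i ∈ A :=
    fun i hi => (hterm i (Finset.ne_of_mem_erase hi)).1
  set rest : A := ∑ i ∈ (Finset.univ.erase i₀).attach,
    (⟨g i.1, hrestA i.1 i.2⟩ : A) with hrest
  have hrestm : rest ∈ IsLocalRing.maximalIdeal A := by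
    refine Ideal.sum_mem _ fun i _ => ?_
    obtain ⟨h, hm⟩ := hterm i.1 (Finset.ne_of_mem_erase i.2)
    exact hm
  have hrestval : (rest : L) = ∑ i ∈ Finset.univ.erase i₀, g i := by
    rw [hrest]
    push_cast
    rw [← Finset.sum_attach (Finset.univ.erase i₀) g]
  -- the term at i₀ is a unit
  set u : K := c i₀ * cc * a ^ (((i₀ : ℕ) + jn) / q) with hu
  have hgi₀ : g i₀ = algebraMap K L u := by
    rw [hg]; simp only [hk0, pow_zero, mul_one, hu]
  have hu0 : u ≠ 0 := mul_ne_zero (mul_ne_zero hc₀ hcc0) (pow_ne_zero _ ha)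
  have hvu : v u = 0 := by
    have h := hval i₀ hc₀
    rw [hk0] at h
    simp only [Nat.cast_zero, zero_mul, add_zero] at h
    rw [hM] at h
    have hq' : (q:ℤ) ≠ 0 := by positivity
    have : v u * q = 0 := by rw [hu]; linarith
    exact (mul_eq_zero.mp this).resolve_right hq'
  have huA : algebraMap K L u ∈ A := (hA u).mpr ((hO u).mpr (Or.inr (by omega)))
  have huinvA : algebraMap K L u⁻¹ ∈ A := by
    refine (hA _).mpr ((hO _).mpr (Or.inr ?_))
    rw [stmt8_v_inv v hmul hu0, hvu]
    norm_num
  have hunit : IsUnit (⟨algebraMap K L u, huA⟩ : A) := by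
    refine IsUnit.of_mul_eq_one ⟨algebraMap K L u⁻¹, huinvA⟩ (Subtype.ext ?_)
    simp only [MulMemClass.coe_mul, ← map_mul, mul_inv_cancel₀ hu0, map_one, OneMemClass.coe_one]
  have heq : (⟨algebraMap K L u, huA⟩ : A) = ⟨x * y, hz⟩ - rest := by
    refine Subtype.ext ?_
    push_cast [hrestval]
    rw [hxy, hgi₀]
    ring
  rw [heq] at hunit
  have : (⟨x * y, hz⟩ : A) - rest ∈ IsLocalRing.maximalIdeal A :=
    Submodule.sub_mem _ hzm hrestm
  rw [IsLocalRing.mem_maximalIdeal, mem_nonunits_iff] at this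
  exact this hunit

/-- Positive direction: if all terms have nonnegative value, the sum lies in `A`. -/
theorem stmt8_mem (q : ℕ) (hq0 : 0 < q) (v : K → ℤ)
    (hmul : ∀ x y : K, x ≠ 0 → y ≠ 0 → v (x * y) = v x + v y)
    (O : ValuationSubring K) (hO : ∀ x : K, x ∈ O ↔ x = 0 ∨ 0 ≤ v x)
    (a : K) (ha : a ≠ 0)
    (α : L) (hαq : α ^ q = algebraMap K L a)
    (A : ValuationSubring L) (hA : ∀ k : K, algebraMap K L k ∈ A ↔ k ∈ O)
    (c : Fin q → K)
    (hge : ∀ i : Fin q, c i ≠ 0 → 0 ≤ q * v (c i) + (i : ℕ) * v a) :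
    (∑ i : Fin q, algebraMap K L (c i) * α ^ (i : ℕ)) ∈ A := by
  refine sum_mem fun i _ => ?_
  by_cases hci : c i = 0
  · simp only [hci, map_zero, zero_mul]
    exact A.zero_mem
  · refine stmt8_memA q hq0 v O hO A hA _ (c i ^ q * a ^ (i:ℕ))
      (stmt8_mono_pow q a α hαq _ _) ?_
    rw [stmt8_v_mono q v hmul ha hci]
    exact hge i hci

end Stmt8Aux

/-- Let `p` be a prime, `q > 1` a power of `p`, and `K` a field containing a primitive
`q`-th root of unity.  Let `v` be a surjective discrete valuation on `K` with valuation
ring `O`, whose residue field has characteristic different from `p`.  Let `a ∈ K^×` with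
`p ∤ v(a)`, and let `L` be a splitting field of `X^q − a` over `K`.  Then `[L : K] = q`,
and for every valuation subring `A` of `L` with `A ∩ K = O`, the inertia subgroup of
`Gal(L/K)` at `A` is the whole group `Gal(L/K)`. -/
theorem stmt8 (p q s : ℕ) (hp : p.Prime) (hqs : q = p ^ s) (hq1 : 1 < q)
    {K : Type*} [Field K] (ζ : K) (hζ : IsPrimitiveRoot ζ q)
    (v : K → ℤ)
    (hmul : ∀ x y : K, x ≠ 0 → y ≠ 0 → v (x * y) = v x + v y)
    (hsurj : ∀ k : ℤ, ∃ x : K, x ≠ 0 ∧ v x = k)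
    (hultra : ∀ x y : K, x ≠ 0 → y ≠ 0 → x + y ≠ 0 → min (v x) (v y) ≤ v (x + y))
    (O : ValuationSubring K) (hO : ∀ x : K, x ∈ O ↔ x = 0 ∨ 0 ≤ v x)
    (hchar : ringChar (IsLocalRing.ResidueField O) ≠ p)
    (a : K) (ha : a ≠ 0) (hpa : ¬ (p : ℤ) ∣ v a)
    {L : Type*} [Field L] [Algebra K L]
    [IsSplittingField K L (X ^ q - C a)] :
    Module.finrank K L = q ∧
      ∀ A : ValuationSubring L, A.comap (algebraMap K L) = O →
        A.decompositionSubgroup K = ⊤ ∧ ValuationSubring.inertiaSubgroup K A = ⊤ := by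
  classical
  have hq0 : 0 < q := by omega
  -- coprimality of q and v a
  have hcp : IsCoprime ((p : ℤ)) (v a) := by
    rw [Int.isCoprime_iff_gcd_eq_one]
    have hnd : ¬ p ∣ (v a).natAbs := by
      rw [← Int.natCast_dvd]; exact hpa
    exact (hp.coprime_iff_not_dvd.mpr hnd : Nat.Coprime p (v a).natAbs)
  have hcop : IsCoprime ((q : ℤ)) (v a) := by
    have : ((q : ℤ)) = ((p : ℤ)) ^ s := by rw [hqs]; push_cast; ring
    rw [this]; exact hcp.pow_left
  -- the polynomial and a root
  have hPm : (X ^ q - C a : K[X]).Monic := monic_X_pow_sub_C a hq0.ne'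
  have hP0 : (X ^ q - C a : K[X]) ≠ 0 := hPm.ne_zero
  have hsplits : Splits ((X ^ q - C a).map (algebraMap K L)) :=
    IsSplittingField.splits L (X ^ q - C a)
  have hPdeg : (X ^ q - C a : K[X]).degree = q := degree_X_pow_sub_C hq0 a
  obtain ⟨α, hroot⟩ := hsplits.exists_eval_eq_zero
    (by rw [degree_map, hPdeg]; exact_mod_cast hq0.ne')
  have hαq : α ^ q = algebraMap K L a := by
    have h := hroot
    simp only [eval_map, eval₂_sub, eval₂_X_pow, eval₂_C, sub_eq_zero] at h
    exact h
  have hfd : FiniteDimensional K L := IsSplittingField.finiteDimensional L (X ^ q - C a)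
  have hnormal : Normal K L := Normal.of_isSplittingField (X ^ q - C a)
  have hint : IsIntegral K α := IsIntegral.of_finite K α
  have hmdvd : minpoly K α ∣ X ^ q - C a :=
    minpoly.dvd K α (by simp [hαq, sub_eq_zero])
  have hmon : (minpoly K α).Monic := minpoly.monic hint
  have hd : (minpoly K α).natDegree = q := by
    have hdle : (minpoly K α).natDegree ≤ q := by
      have := natDegree_le_of_dvd hmdvd hP0
      rwa [natDegree_X_pow_sub_C] at this
    have hsm : Splits ((minpoly K α).map (algebraMap K L)) := hnormal.splits α
    set R := ((minpoly K α).map (algebraMap K L)).roots with hR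
    have hcard : Multiset.card R = (minpoly K α).natDegree :=
      by rw [hR, ← hsm.natDegree_eq_card_roots, natDegree_map]
    have hprodroots : algebraMap K L ((minpoly K α).coeff 0)
        = (-1) ^ (minpoly K α).natDegree * R.prod := by
      have h1 := hsm.coeff_zero_eq_prod_roots_of_monic (hmon.map _)
      rwa [coeff_map, natDegree_map] at h1
    have hrootval : ∀ r ∈ R, r ^ q = algebraMap K L a := by
      intro r hr
      have hmm0 : (minpoly K α).map (algebraMap K L) ≠ 0 :=
        (hmon.map _).ne_zero
      have hr' : ((minpoly K α).map (algebraMap K L)).IsRoot r :=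
        isRoot_of_mem_roots hr
      have hfr : ((X ^ q - C a : K[X]).map (algebraMap K L)).IsRoot r :=
        hr'.dvd (Polynomial.map_dvd (algebraMap K L) hmdvd)
      simpa [sub_eq_zero] using hfr
    have hprodq : R.prod ^ q = algebraMap K L (a ^ (minpoly K α).natDegree) := by
      have h2 : (R.map fun x : L => x ^ q).prod = R.prod ^ q := by
        simpa using (Multiset.prod_map_pow (m := R) (f := id) (n := q))
      have h3 : (R.map fun x : L => x ^ q) =
          Multiset.replicate (Multiset.card R) (algebraMap K L a) := by
        rw [Multiset.eq_replicate]
        constructor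
        · simp
        · intro b hb
          obtain ⟨r, hr, rfl⟩ := Multiset.mem_map.mp hb
          exact hrootval r hr
      rw [← h2, h3, Multiset.prod_replicate, hcard, map_pow]
    set b : K := (-1) ^ (minpoly K α).natDegree * (minpoly K α).coeff 0 with hb
    have hbq : algebraMap K L (b ^ q) = algebraMap K L (a ^ (minpoly K α).natDegree) := by
      rw [map_pow, hb, map_mul, hprodroots, ← hprodq]
      simp only [map_pow, map_neg, map_one]
      rw [← mul_assoc, ← pow_add, Even.neg_one_pow ⟨(minpoly K α).natDegree, rfl⟩, one_mul]
    have hbq' : b ^ q = a ^ (minpoly K α).natDegree :=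
      (algebraMap K L).injective hbq
    have hb0 : b ≠ 0 := by
      intro h0
      apply pow_ne_zero (minpoly K α).natDegree ha
      rw [← hbq', h0, zero_pow hq0.ne']
    have hv : (q:ℤ) * v b = (minpoly K α).natDegree * v a := by
      rw [← stmt8_v_pow v hmul hb0 q, hbq', stmt8_v_pow v hmul ha]
    have hdvd : (q:ℤ) ∣ ((minpoly K α).natDegree : ℤ) * v a := ⟨v b, hv.symm⟩
    have hqd : q ∣ (minpoly K α).natDegree := by
      exact_mod_cast hcop.dvd_of_dvd_mul_right hdvd
    have hdpos : 0 < (minpoly K α).natDegree := minpoly.natDegree_pos hint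
    exact le_antisymm hdle (Nat.le_of_dvd hdpos hqd)
  -- irreducibility and the degree of L
  have hPirr : Irreducible (X ^ q - C a : K[X]) := by
    have hassoc : Associated (minpoly K α) (X ^ q - C a) :=
      associated_of_dvd_of_natDegree_le hmdvd hP0
        (by rw [hd, natDegree_X_pow_sub_C])
    have : minpoly K α = X ^ q - C a :=
      eq_of_monic_of_associated hmon hPm hassoc
    rw [← this]
    exact minpoly.irreducible hint
  have hζ' : (primitiveRoots q K).Nonempty := ⟨ζ, (mem_primitiveRoots hq0).mpr hζ⟩
  have hfin : Module.finrank K L = q :=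
    finrank_of_isSplittingField_X_pow_sub_C hζ' hPirr L
  have hadj : Algebra.adjoin K {α} = ⊤ :=
    Algebra.adjoin_root_eq_top_of_isSplittingField hζ' hPirr hαq
  -- every element of L is a K-combination of 1, α, ..., α^(q-1)
  have hpow_mem : ∀ n : ℕ, α ^ n ∈
      Submodule.span K (Set.range fun i : Fin q => α ^ (i : ℕ)) := by
    intro n
    induction n using Nat.strong_induction_on with
    | _ n ih =>
      by_cases hn : n < q
      · exact Submodule.subset_span ⟨⟨n, hn⟩, rfl⟩
      · push_neg at hn
        have hcalc : α ^ n = a • α ^ (n - q) := by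
          rw [Algebra.smul_def, ← hαq, ← pow_add]
          congr 1
          omega
        rw [hcalc]
        exact Submodule.smul_mem _ _ (ih (n - q) (by omega))
  have hspan : ∀ x : L, ∃ c : Fin q → K,
      x = ∑ i : Fin q, algebraMap K L (c i) * α ^ (i : ℕ) := by
    intro x
    have hx : x ∈ Algebra.adjoin K {α} := by rw [hadj]; trivial
    rw [Algebra.adjoin_singleton_eq_range_aeval] at hx
    obtain ⟨Q, rfl⟩ := hx
    have hmem : (aeval α) Q ∈
        Submodule.span K (Set.range fun i : Fin q => α ^ (i : ℕ)) := by
      rw [aeval_eq_sum_range]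
      exact sum_mem fun i _ => Submodule.smul_mem _ _ (hpow_mem i)
    obtain ⟨c, hc⟩ := (Submodule.mem_span_range_iff_exists_fun K).mp hmem
    refine ⟨c, ?_⟩
    show (aeval α) Q = _
    rw [← hc]
    exact Finset.sum_congr rfl fun i _ => Algebra.smul_def _ _
  -- membership criterion
  have hcomap : ∀ A : ValuationSubring L, A.comap (algebraMap K L) = O →
      ∀ k : K, algebraMap K L k ∈ A ↔ k ∈ O := by
    intro A hA k
    rw [← hA]
    exact ValuationSubring.mem_comap.symm
  have hmemiff : ∀ A : ValuationSubring L, A.comap (algebraMap K L) = O →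
      ∀ c : Fin q → K, ((∑ i : Fin q, algebraMap K L (c i) * α ^ (i : ℕ)) ∈ A ↔
        (∀ i : Fin q, c i ≠ 0 → 0 ≤ q * v (c i) + (i : ℕ) * v a)) := by
    intro A hA c
    constructor
    · intro hxA i hci
      by_contra hneg
      push_neg at hneg
      obtain ⟨i₀, hi₀S, hmin⟩ := Finset.exists_min_image
        (Finset.univ.filter fun i' => c i' ≠ 0)
        (fun i' => (q : ℤ) * v (c i') + (i' : ℕ) * v a)
        ⟨i, by simp [hci]⟩
      have hci₀ : c i₀ ≠ 0 := (Finset.mem_filter.mp hi₀S).2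
      refine stmt8_not_mem q hq1 v hmul hsurj O hO a ha hcop α hαq A (hcomap A hA)
        c i₀ hci₀ (fun i' hi' => hmin i' (by simp [hi'])) ?_ hxA
      exact lt_of_le_of_lt (hmin i (by simp [hci])) (by omega)
    · intro h
      exact stmt8_mem q hq0 v hmul O hO a ha α hαq A (hcomap A hA) c h
  -- uniqueness of the valuation subring lying over O
  have huniq : ∀ A B : ValuationSubring L, A.comap (algebraMap K L) = O →
      B.comap (algebraMap K L) = O → A = B := by
    intro A B hA hB
    ext x
    obtain ⟨c, rfl⟩ := hspan x
    rw [hmemiff A hA c, hmemiff B hB c]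
  refine ⟨hfin, fun A hA => ?_⟩
  have hdecomp : A.decompositionSubgroup K = ⊤ := by
    rw [eq_top_iff]
    intro σ _
    rw [MulAction.mem_stabilizer_iff]
    refine huniq _ _ ?_ hA
    ext k
    rw [ValuationSubring.mem_comap,
      ValuationSubring.mem_pointwise_smul_iff_inv_smul_mem]
    have hfix : σ⁻¹ • (algebraMap K L k) = algebraMap K L k :=
      AlgEquiv.commutes σ⁻¹ k
    rw [hfix, ← hA, ValuationSubring.mem_comap]
  refine ⟨hdecomp, ?_⟩
  rw [eq_top_iff]
  intro g _
  rw [ValuationSubring.inertiaSubgroup, MonoidHom.mem_ker]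
  have hcong : ∀ x : A, ∃ h : ((g : L ≃ₐ[K] L) (x : L) - (x : L)) ∈ A,
      (⟨_, h⟩ : A) ∈ IsLocalRing.maximalIdeal A := by
    intro x
    obtain ⟨c, hc⟩ := hspan (x : L)
    have hxA : (∑ i : Fin q, algebraMap K L (c i) * α ^ (i : ℕ)) ∈ A := hc ▸ x.2
    have hcoeff := (hmemiff A hA c).mp hxA
    have hσα : ((g : L ≃ₐ[K] L) α) ^ q = algebraMap K L a := by
      rw [← map_pow, hαq]
      exact (g : L ≃ₐ[K] L).commutes a
    have hterm : ∀ i : Fin q, ∃ h : (algebraMap K L (c i) * ((g : L ≃ₐ[K] L) α) ^ (i : ℕ)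
        - algebraMap K L (c i) * α ^ (i : ℕ)) ∈ A,
        (⟨_, h⟩ : A) ∈ IsLocalRing.maximalIdeal A := by
      intro i
      by_cases hci : c i = 0
      · have hz : algebraMap K L (c i) * ((g : L ≃ₐ[K] L) α) ^ (i : ℕ)
            - algebraMap K L (c i) * α ^ (i : ℕ) = 0 := by simp [hci]
        refine ⟨hz ▸ A.zero_mem, ?_⟩
        have he : (⟨_, hz ▸ A.zero_mem⟩ : A) = 0 := Subtype.ext hz
        rw [he]
        exact Submodule.zero_mem _
      by_cases hi0 : (i : ℕ) = 0
      · have hz : algebraMap K L (c i) * ((g : L ≃ₐ[K] L) α) ^ (i : ℕ)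
            - algebraMap K L (c i) * α ^ (i : ℕ) = 0 := by simp [hi0]
        refine ⟨hz ▸ A.zero_mem, ?_⟩
        have he : (⟨_, hz ▸ A.zero_mem⟩ : A) = 0 := Subtype.ext hz
        rw [he]
        exact Submodule.zero_mem _
      · have ht1 : 1 ≤ (q : ℤ) * v (c i) + (i : ℕ) * v a := by
          have h0 := hcoeff i hci
          rcases eq_or_lt_of_le h0 with heq | hlt
          · exfalso
            have hdvd : (q : ℤ) ∣ ((i : ℕ) : ℤ) * v a := ⟨-(v (c i)), by linarith⟩
            have : q ∣ (i : ℕ) := by exact_mod_cast hcop.dvd_of_dvd_mul_right hdvd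
            exact hi0 (Nat.eq_zero_of_dvd_of_lt this i.isLt)
          · omega
        have hvk : 1 ≤ v (c i ^ q * a ^ (i : ℕ)) := by
          rw [stmt8_v_mono q v hmul ha hci]; omega
        obtain ⟨h1, hm1⟩ := stmt8_maxA q hq0 v hmul O hO A (hcomap A hA) _ _
          (mul_ne_zero (pow_ne_zero _ hci) (pow_ne_zero _ ha))
          (stmt8_mono_pow q a ((g : L ≃ₐ[K] L) α) hσα (c i) (i : ℕ)) hvk
        obtain ⟨h2, hm2⟩ := stmt8_maxA q hq0 v hmul O hO A (hcomap A hA) _ _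
          (mul_ne_zero (pow_ne_zero _ hci) (pow_ne_zero _ ha))
          (stmt8_mono_pow q a α hαq (c i) (i : ℕ)) hvk
        refine ⟨sub_mem h1 h2, ?_⟩
        have he : (⟨_, sub_mem h1 h2⟩ : A) = ⟨_, h1⟩ - ⟨_, h2⟩ := rfl
        rw [he]
        exact Submodule.sub_mem _ hm1 hm2
    have hσx : (g : L ≃ₐ[K] L) (x : L) - (x : L) = ∑ i : Fin q,
        (algebraMap K L (c i) * ((g : L ≃ₐ[K] L) α) ^ (i : ℕ)
          - algebraMap K L (c i) * α ^ (i : ℕ)) := by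
      rw [Finset.sum_sub_distrib, hc, map_sum]
      congr 1
      refine Finset.sum_congr rfl fun i _ => ?_
      rw [map_mul, map_pow, (g : L ≃ₐ[K] L).commutes]
    set F : Fin q → A := fun i => ⟨_, (hterm i).1⟩ with hF
    have hsum : ((∑ i : Fin q, F i : A) : L) = (g : L ≃ₐ[K] L) (x : L) - (x : L) := by
      rw [AddSubmonoidClass.coe_finset_sum, hσx]
    refine ⟨hsum ▸ (∑ i : Fin q, F i : A).2, ?_⟩
    have he : (⟨_, hsum ▸ (∑ i : Fin q, F i : A).2⟩ : A) = ∑ i : Fin q, F i :=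
      Subtype.ext hsum.symm
    rw [he]
    exact Ideal.sum_mem _ fun i _ => (hterm i).2
  refine RingEquiv.ext fun xb => ?_
  obtain ⟨x, rfl⟩ := Ideal.Quotient.mk_surjective xb
  obtain ⟨hmem, hmax⟩ := hcong x
  have h2 : ((g • x : A) : L) = (g : L ≃ₐ[K] L) (x : L) := rfl
  have hsub : (g • x : A) - x ∈ IsLocalRing.maximalIdeal A := by
    have he : (g • x : A) - x = ⟨_, hmem⟩ := by
      apply Subtype.ext
      show ((g • x : A) : L) - (x : L) = _
      rw [h2]
    rw [he]
    exact hmax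
  have h3 : (MulSemiringAction.toRingAut (A.decompositionSubgroup K)
      (IsLocalRing.ResidueField A) g) ((Ideal.Quotient.mk (IsLocalRing.maximalIdeal A)) x)
      = (Ideal.Quotient.mk (IsLocalRing.maximalIdeal A)) (g • x) := rfl
  rw [h3]
  show _ = (Ideal.Quotient.mk (IsLocalRing.maximalIdeal A)) x
  rw [Ideal.Quotient.eq]
  exact hsub
end
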